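/- (1) For a prime ideal P of A, the ideal P'^f := {(p, f(p)+j) : p ∈ P, j ∈ J} is a maximal ideal of A⋈^f J if and only if P is a maximal ideal of A. (2) For a prime ideal Q of B not containing J, the ideal Q̄^f := {(a, f(a)+j) : a ∈ A, j ∈ J, f(a)+j ∈ Q} is a maximal ideal of A⋈^f J if and only if Q is a maximal ideal of B. Consequently, the maximal ideals of A⋈^f J are exactly the ideals P'^f with P ∈ Max(A) together with the ideals Q̄^f with Q ∈ Max(B) and J ⊄ Q. -/

import Mathlib

section Amalgamation

variable {A B : Type*} [CommRing A] [CommRing B]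

/-- The amalgamation `A ⋈^f J` of `A` with `B` along the ideal `J` of `B` with respect to
the ring homomorphism `f : A → B`, realized as the subring
`{(a, f a + j) | a ∈ A, j ∈ J}` of `A × B`. -/
def amalg (f : A →+* B) (J : Ideal B) : Subring (A × B) where
  carrier := {x : A × B | x.2 - f x.1 ∈ J}
  zero_mem' := by simp
  one_mem' := by simp
  add_mem' := by
    intro x y hx hy
    simp only [Set.mem_setOf_eq, Prod.fst_add, Prod.snd_add, map_add] at *
    have h : x.2 + y.2 - (f x.1 + f y.1) = x.2 - f x.1 + (y.2 - f y.1) := by ring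
    rw [h]; exact J.add_mem hx hy
  neg_mem' := by
    intro x hx
    simp only [Set.mem_setOf_eq, Prod.fst_neg, Prod.snd_neg, map_neg] at *
    have h : -x.2 - -f x.1 = -(x.2 - f x.1) := by ring
    rw [h]; exact J.neg_mem hx
  mul_mem' := by
    intro x y hx hy
    simp only [Set.mem_setOf_eq, Prod.fst_mul, Prod.snd_mul, map_mul] at *
    have h : x.2 * y.2 - f x.1 * f y.1 = x.2 * (y.2 - f y.1) + (x.2 - f x.1) * f y.1 := by ring
    rw [h]
    exact J.add_mem (J.mul_mem_left _ hy) (J.mul_mem_right _ hx)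

lemma mem_amalg_iff (f : A →+* B) (J : Ideal B) (x : A × B) :
    x ∈ amalg f J ↔ x.2 - f x.1 ∈ J := Iff.rfl

/-- The natural projection `p_A : A ⋈^f J → A`. -/
def pA (f : A →+* B) (J : Ideal B) : amalg f J →+* A :=
  (RingHom.fst A B).comp (amalg f J).subtype

/-- The natural projection `p_B : A ⋈^f J → B`. -/
def pB (f : A →+* B) (J : Ideal B) : amalg f J →+* B :=
  (RingHom.snd A B).comp (amalg f J).subtype

/-- For an ideal `P` of `A`, the ideal `P'^f = P ⋈^f J = {(p, f p + j) | p ∈ P, j ∈ J}`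
of `A ⋈^f J`. -/
def idealPf (f : A →+* B) (J : Ideal B) (P : Ideal A) : Ideal (amalg f J) :=
  Submodule.copy (Ideal.comap (pA f J) P)
    {x : amalg f J | ∃ p ∈ P, ∃ j ∈ J, (x : A × B) = (p, f p + j)}
    (by
      ext x
      simp only [Set.mem_setOf_eq, SetLike.mem_coe, Ideal.mem_comap]
      constructor
      · rintro ⟨p, hp, j, hj, hx⟩
        have h1 : pA f J x = p := by
          show (x : A × B).1 = p
          rw [hx]
        rw [h1]; exact hp
      · intro hx
        refine ⟨(x : A × B).1, hx, (x : A × B).2 - f (x : A × B).1,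
          (mem_amalg_iff f J _).mp x.2, ?_⟩
        ext <;> simp)

/-- For an ideal `Q` of `B`, the ideal `Q̄^f = {(a, f a + j) | a ∈ A, j ∈ J, f a + j ∈ Q}`
of `A ⋈^f J`. -/
def idealQf (f : A →+* B) (J : Ideal B) (Q : Ideal B) : Ideal (amalg f J) :=
  Submodule.copy (Ideal.comap (pB f J) Q)
    {x : amalg f J | ∃ a : A, ∃ j ∈ J, (x : A × B) = (a, f a + j) ∧ f a + j ∈ Q}
    (by
      ext x
      simp only [Set.mem_setOf_eq, SetLike.mem_coe, Ideal.mem_comap]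
      constructor
      · rintro ⟨a, j, hj, hx, hQ⟩
        have h1 : pB f J x = f a + j := by
          show (x : A × B).2 = f a + j
          rw [hx]
        rw [h1]; exact hQ
      · intro hx
        refine ⟨(x : A × B).1, (x : A × B).2 - f (x : A × B).1,
          (mem_amalg_iff f J _).mp x.2, by ext <;> simp, ?_⟩
        simpa using (show (x : A × B).2 ∈ Q from hx))

end Amalgamation

section AmalgAux

variable {A B : Type*} [CommRing A] [CommRing B]

lemma idealPf_eq_comap (f : A →+* B) (J : Ideal B) (P : Ideal A) :
    idealPf f J P = Ideal.comap (pA f J) P := Submodule.copy_eq _ _ _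

lemma idealQf_eq_comap (f : A →+* B) (J : Ideal B) (Q : Ideal B) :
    idealQf f J Q = Ideal.comap (pB f J) Q := Submodule.copy_eq _ _ _

lemma pA_surjective (f : A →+* B) (J : Ideal B) : Function.Surjective (pA f J) :=
  fun a => ⟨⟨(a, f a), by simp [mem_amalg_iff]⟩, rfl⟩

/-- The element `(0, j)` of the amalgamation, for `j ∈ J`. -/
def el (f : A →+* B) (J : Ideal B) (j : B) (hj : j ∈ J) : amalg f J :=
  ⟨(0, j), by simpa [mem_amalg_iff] using hj⟩

lemma el_congr (f : A →+* B) (J : Ideal B) {j j' : B} (hj : j ∈ J) (hj' : j' ∈ J)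
    (h : j = j') : el f J j hj = el f J j' hj' := by subst h; rfl

lemma el_mul_el (f : A →+* B) (J : Ideal B) {j j' : B} (hj : j ∈ J) (hj' : j' ∈ J) :
    el f J j hj * el f J j' hj' = el f J (j * j') (J.mul_mem_right j' hj) := by
  apply Subtype.ext; apply Prod.ext <;> simp [el]

lemma el_mul (f : A →+* B) (J : Ideal B) {j : B} (hj : j ∈ J) (x : amalg f J) :
    el f J j hj * x = el f J (j * (x : A × B).2) (J.mul_mem_right _ hj) := by
  apply Subtype.ext; apply Prod.ext <;> simp [el]

lemma amalg_part1 (f : A →+* B) (J : Ideal B) (P : Ideal A) (hP : P.IsPrime) :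
    (Ideal.comap (pA f J) P).IsMaximal ↔ P.IsMaximal := by
  constructor
  · intro h
    have hmap := Ideal.map_comap_of_surjective (pA f J) (pA_surjective f J) P
    rcases Ideal.map_eq_top_or_isMaximal_of_surjective (pA f J) (pA_surjective f J) h with
      ht | hm
    · exact absurd (hmap ▸ ht) hP.ne_top
    · exact hmap ▸ hm
  · intro h
    exact Ideal.comap_isMaximal_of_surjective _ (pA_surjective f J) (H := h)

set_option maxHeartbeats 1000000 in
lemma amalg_part2 (f : A →+* B) (J : Ideal B) (Q : Ideal B) (hQ : Q.IsPrime) (hJQ : ¬ J ≤ Q) :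
    (Ideal.comap (pB f J) Q).IsMaximal ↔ Q.IsMaximal := by
  obtain ⟨j₀, hj₀J, hj₀Q⟩ := SetLike.not_le_iff_exists.mp hJQ
  constructor
  · intro h
    obtain ⟨M, hM, hQM⟩ := Ideal.exists_le_maximal Q hQ.ne_top
    have hMne : Ideal.comap (pB f J) M ≠ ⊤ := Ideal.comap_ne_top _ hM.ne_top
    have heq : Ideal.comap (pB f J) Q = Ideal.comap (pB f J) M :=
      h.eq_of_le hMne (Ideal.comap_mono hQM)
    have hMQ : M ≤ Q := by
      intro q hq
      have h1 : el f J (j₀ * q) (J.mul_mem_right q hj₀J) ∈ Ideal.comap (pB f J) M := by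
        show j₀ * q ∈ M
        exact M.mul_mem_left j₀ hq
      rw [← heq] at h1
      have h2 : j₀ * q ∈ Q := h1
      rcases hQ.mem_or_mem h2 with h3 | h3
      · exact absurd h3 hj₀Q
      · exact h3
    have : Q = M := le_antisymm hQM hMQ
    exact this ▸ hM
  · intro hQmax
    haveI := hQmax
    have hsup : J ⊔ Q = ⊤ := by
      by_contra hne
      exact hJQ (sup_le_iff.mp (hQmax.eq_of_le hne le_sup_right).ge |>.1)
    obtain ⟨j, hj, q, hq, hjq⟩ := Submodule.mem_sup.mp (hsup ▸ Submodule.mem_top :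
      (1 : B) ∈ J ⊔ Q)
    have hsurj : Function.Surjective ((Ideal.Quotient.mk Q).comp (pB f J)) := by
      intro y
      obtain ⟨b, rfl⟩ := Ideal.Quotient.mk_surjective y
      refine ⟨el f J (j * b) (J.mul_mem_right b hj), ?_⟩
      show Ideal.Quotient.mk Q (j * b) = Ideal.Quotient.mk Q b
      rw [Ideal.Quotient.eq]
      have : j * b - b = -(q * b) := by
        have : j = 1 - q := by linear_combination hjq
        rw [this]; ring
      rw [this]
      exact Q.neg_mem (Q.mul_mem_right b hq)
    have hker : Ideal.comap (pB f J) Q = RingHom.ker ((Ideal.Quotient.mk Q).comp (pB f J)) := by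
      rw [← RingHom.comap_ker, Ideal.mk_ker]
    rw [hker]
    letI : Field (B ⧸ Q) := Ideal.Quotient.field Q
    exact RingHom.ker_isMaximal_of_surjective ((Ideal.Quotient.mk Q).comp (pB f J)) hsurj

end AmalgAux

section AmalgAux2

variable {A B : Type*} [CommRing A] [CommRing B]

lemma amalg_case2 (f : A →+* B) (J : Ideal B) (H : Ideal (amalg f J)) (hH : H.IsMaximal)
    {j₀ : B} (hj₀ : j₀ ∈ J) (hx₀ : el f J j₀ hj₀ ∉ H) :
    ∃ Q : Ideal B, Q.IsMaximal ∧ ¬ J ≤ Q ∧ H = idealQf f J Q := by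
  have hHp : H.IsPrime := hH.isPrime
  have hmem : ∀ b : B, j₀ * b ∈ J := fun b => J.mul_mem_right b hj₀
  let Q : Ideal B :=
  { carrier := {b : B | el f J (j₀ * b) (hmem b) ∈ H}
    zero_mem' := by
      have h0 : el f J (j₀ * 0) (hmem 0) = 0 := by
        apply Subtype.ext; apply Prod.ext <;> simp [el]
      show el f J (j₀ * 0) (hmem 0) ∈ H
      rw [h0]; exact H.zero_mem
    add_mem' := by
      intro b c hb hc
      show el f J (j₀ * (b + c)) (hmem (b + c)) ∈ H
      have hadd : el f J (j₀ * (b + c)) (hmem (b + c))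
          = el f J (j₀ * b) (hmem b) + el f J (j₀ * c) (hmem c) := by
        apply Subtype.ext; apply Prod.ext <;> simp [el] <;> ring
      rw [hadd]; exact H.add_mem hb hc
    smul_mem' := by
      intro c b hb
      show el f J (j₀ * (c * b)) (hmem (c * b)) ∈ H
      have h1 : el f J (j₀ * c) (hmem c) * el f J (j₀ * b) (hmem b) ∈ H :=
        H.mul_mem_left _ hb
      have h2 : el f J (j₀ * c) (hmem c) * el f J (j₀ * b) (hmem b)
          = el f J j₀ hj₀ * el f J (j₀ * (c * b)) (hmem (c * b)) := by
        rw [el_mul_el, el_mul_el]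
        exact el_congr f J _ _ (by ring)
      rw [h2] at h1
      exact (hHp.mem_or_mem h1).resolve_left hx₀ }
  have hQmemIff : ∀ b : B, b ∈ Q ↔ el f J (j₀ * b) (hmem b) ∈ H := fun b => Iff.rfl
  have hQprime : Q.IsPrime := by
    constructor
    · intro ht
      apply hx₀
      have h1 : (1 : B) ∈ Q := ht ▸ Submodule.mem_top
      have h2 : el f J (j₀ * 1) (hmem 1) = el f J j₀ hj₀ := el_congr f J _ _ (by ring)
      rw [← h2]; exact (hQmemIff 1).mp h1
    · intro b c hbc
      have h1 : el f J (j₀ * (b * c)) (hmem (b * c)) ∈ H := (hQmemIff _).mp hbc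
      have h2 : el f J (j₀ * b) (hmem b) * el f J (j₀ * c) (hmem c)
          = el f J j₀ hj₀ * el f J (j₀ * (b * c)) (hmem (b * c)) := by
        rw [el_mul_el, el_mul_el]
        exact el_congr f J _ _ (by ring)
      have h3 : el f J (j₀ * b) (hmem b) * el f J (j₀ * c) (hmem c) ∈ H := by
        rw [h2]; exact H.mul_mem_left _ h1
      exact (hHp.mem_or_mem h3).imp (fun h => (hQmemIff b).mpr h) (fun h => (hQmemIff c).mpr h)
  have hJQ : ¬ J ≤ Q := by
    intro hle
    apply hx₀
    have h1 : el f J (j₀ * j₀) (hmem j₀) ∈ H := (hQmemIff j₀).mp (hle hj₀)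
    have h2 : el f J j₀ hj₀ * el f J j₀ hj₀ = el f J (j₀ * j₀) (hmem j₀) := by
      rw [el_mul_el]
    rw [← h2] at h1
    exact (hHp.mem_or_mem h1).elim id id
  have hHQ : H = Ideal.comap (pB f J) Q := by
    ext x
    rw [Ideal.mem_comap, hQmemIff]
    have hpb : el f J (j₀ * pB f J x) (hmem _) = el f J (j₀ * (x : A × B).2) (hmem _) := rfl
    rw [hpb]
    have hx : el f J j₀ hj₀ * x = el f J (j₀ * (x : A × B).2) (hmem _) := el_mul f J hj₀ x
    constructor
    · intro h
      rw [← hx]; exact H.mul_mem_left _ h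
    · intro h
      rw [← hx] at h
      exact (hHp.mem_or_mem h).resolve_left hx₀
  have hHQ' : H = idealQf f J Q := by rw [idealQf_eq_comap]; exact hHQ
  refine ⟨Q, ?_, hJQ, hHQ'⟩
  exact (amalg_part2 f J Q hQprime hJQ).mp (hHQ ▸ hH)

end AmalgAux2

/-- `P'^f` is maximal iff `P` is maximal; for `Q` prime with `J ⊄ Q`, `Q̄^f` is maximal
iff `Q` is maximal; and the maximal ideals of `A ⋈^f J` are exactly those of these
two forms. -/
theorem stmt7 {A B : Type*} [CommRing A] [CommRing B] (f : A →+* B) (J : Ideal B) :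
    (∀ P : Ideal A, P.IsPrime → ((idealPf f J P).IsMaximal ↔ P.IsMaximal)) ∧
    (∀ Q : Ideal B, Q.IsPrime → ¬ J ≤ Q → ((idealQf f J Q).IsMaximal ↔ Q.IsMaximal)) ∧
    (∀ H : Ideal (amalg f J), H.IsMaximal ↔
      ((∃ P : Ideal A, P.IsMaximal ∧ H = idealPf f J P) ∨
       (∃ Q : Ideal B, Q.IsMaximal ∧ ¬ J ≤ Q ∧ H = idealQf f J Q))) := by
  refine ⟨fun P hP => by rw [idealPf_eq_comap]; exact amalg_part1 f J P hP,
    fun Q hQ hJQ => by rw [idealQf_eq_comap]; exact amalg_part2 f J Q hQ hJQ, ?_⟩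
  intro H
  constructor
  · intro hH
    by_cases hcase : ∀ j (hj : j ∈ J), el f J j hj ∈ H
    · left
      have hker : RingHom.ker (pA f J) ≤ H := by
        intro x hx
        have h1 : (x : A × B).1 = 0 := hx
        have h2 : (x : A × B).2 ∈ J := by
          have h3 := (mem_amalg_iff f J x).mp x.2
          rwa [h1, map_zero, sub_zero] at h3
        have h4 : x = el f J (x : A × B).2 h2 := by
          apply Subtype.ext; apply Prod.ext
          · exact h1
          · rfl
        rw [h4]; exact hcase _ h2
      have hcm := Ideal.comap_map_of_surjective (pA f J) (pA_surjective f J) H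
      have hsup : H ⊔ Ideal.comap (pA f J) ⊥ = H :=
        sup_eq_left.mpr (by rw [← RingHom.ker_eq_comap_bot]; exact hker)
      rw [hsup] at hcm
      refine ⟨Ideal.map (pA f J) H, ?_, ?_⟩
      · rcases Ideal.map_eq_top_or_isMaximal_of_surjective (pA f J) (pA_surjective f J) hH with
          ht | hm
        · exfalso
          apply hH.ne_top
          rw [← hcm, ht, Ideal.comap_top]
        · exact hm
      · rw [idealPf_eq_comap, hcm]
    · right
      push_neg at hcase
      obtain ⟨j₀, hj₀, hx₀⟩ := hcase
      exact amalg_case2 f J H hH hj₀ hx₀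
  · rintro (⟨P, hP, rfl⟩ | ⟨Q, hQ, hJQ, rfl⟩)
    · rw [idealPf_eq_comap]
      exact (amalg_part1 f J P hP.isPrime).mpr hP
    · rw [idealQf_eq_comap]
      exact (amalg_part2 f J Q hQ.isPrime hJQ).mpr hQ
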